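/- (Laguerre inversion formula) For nonnegative integers j <= i, the sum over k from j to i of L_{i-k}^{(-alpha-i-1)}(-x) L_{k-j}^{(alpha+j)}(x) equals the Kronecker delta delta_{ij}. -/

import Mathlib

noncomputable def poch (a : ℝ) (k : ℕ) : ℝ := ∏ m ∈ Finset.range k, (a + m)

noncomputable def lag (α : ℝ) (n : ℕ) (x : ℝ) : ℝ :=
  ∑ k ∈ Finset.range (n + 1),
    (-1) ^ k * (poch (α + k + 1) (n - k) / (n - k).factorial) * x ^ k / k.factorial

noncomputable def jacobi (α β : ℝ) (n : ℕ) (x : ℝ) : ℝ :=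
  ∑ k ∈ Finset.range (n + 1),
    poch ((n : ℝ) + α + β + 1) k * poch (α + k + 1) (n - k) /
      (k.factorial * (n - k).factorial) * ((x - 1) / 2) ^ k

noncomputable def charlier (a : ℝ) (n : ℕ) (x : ℝ) : ℝ :=
  ∑ m ∈ Finset.range (n + 1),
    (∏ j ∈ Finset.range m, (x - (j : ℝ))) / m.factorial * (-a) ^ (n - m) / (n - m).factorial

open Finset


lemma poch_zero (a : ℝ) : poch a 0 = 1 := by simp [poch]
lemma poch_succ (a : ℝ) (k : ℕ) : poch a (k+1) = poch a k * (a + k) := by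
  simp [poch, Finset.prod_range_succ]

noncomputable def ff (a : ℝ) (k : ℕ) : ℝ := poch a k / k.factorial

lemma ff_zero (a : ℝ) : ff a 0 = 1 := by simp [ff, poch_zero]
lemma ff_succ (a : ℝ) (k : ℕ) : ((k:ℝ)+1) * ff a (k+1) = (a + k) * ff a k := by
  have h1 : (k.factorial : ℝ) ≠ 0 := Nat.cast_ne_zero.2 k.factorial_ne_zero
  have h2 : ((k:ℝ)+1) ≠ 0 := by positivity
  simp only [ff, poch_succ, Nat.factorial_succ]
  push_cast
  field_simp

lemma vandermonde (a b : ℝ) (N : ℕ) :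
    ∑ k ∈ range (N+1), ff a k * ff b (N-k) = ff (a+b) N := by
  induction N with
  | zero => simp [ff_zero]
  | succ N ih =>
    have h2 : ((N:ℝ)+1) ≠ 0 := by positivity
    apply mul_left_cancel₀ h2
    rw [Finset.mul_sum]
    have split : ∑ k ∈ range (N+2), ((N:ℝ)+1) * (ff a k * ff b (N+1-k))
        = (∑ k ∈ range (N+2), (k:ℝ) * ff a k * ff b (N+1-k))
          + ∑ k ∈ range (N+2), ((N+1-k : ℕ):ℝ) * ff a k * ff b (N+1-k) := by
      rw [← Finset.sum_add_distrib]
      refine Finset.sum_congr rfl fun k hk => ?_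
      have hk' : k ≤ N+1 := by simpa [Nat.lt_succ_iff] using hk
      have : ((N+1-k : ℕ):ℝ) = (N:ℝ) + 1 - k := by
        push_cast [Nat.cast_sub hk']; ring
      rw [this]; ring
    have s1 : (∑ k ∈ range (N+2), (k:ℝ) * ff a k * ff b (N+1-k))
        = ∑ k ∈ range (N+1), (a + k) * ff a k * ff b (N-k) := by
      rw [Finset.sum_range_succ']
      simp only [Nat.cast_zero, zero_mul, add_zero, Nat.succ_sub_succ]
      refine Finset.sum_congr rfl fun k hk => ?_
      rw [Nat.cast_add, Nat.cast_one]
      linear_combination ff b (N-k) * ff_succ a k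
    have s2 : (∑ k ∈ range (N+2), ((N+1-k : ℕ):ℝ) * ff a k * ff b (N+1-k))
        = ∑ k ∈ range (N+1), (b + ((N-k : ℕ):ℝ)) * ff a k * ff b (N-k) := by
      rw [Finset.sum_range_succ]
      simp only [Nat.sub_self, Nat.cast_zero, zero_mul, add_zero]
      refine Finset.sum_congr rfl fun k hk => ?_
      have hk' : k ≤ N := by simpa [Nat.lt_succ_iff] using hk
      have h3 : N + 1 - k = (N - k) + 1 := by omega
      rw [h3, Nat.cast_add, Nat.cast_one]
      linear_combination ff a k * ff_succ b (N-k)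
    rw [split, s1, s2, ← Finset.sum_add_distrib]
    have comb : ∑ k ∈ range (N+1),
        ((a + (k:ℝ)) * ff a k * ff b (N-k) + (b + ((N-k : ℕ):ℝ)) * ff a k * ff b (N-k))
        = (a + b + N) * ∑ k ∈ range (N+1), ff a k * ff b (N-k) := by
      rw [Finset.mul_sum]
      refine Finset.sum_congr rfl fun k hk => ?_
      have hk' : k ≤ N := by simpa [Nat.lt_succ_iff] using hk
      have : ((N-k : ℕ):ℝ) = (N:ℝ) - k := by push_cast [Nat.cast_sub hk']; ring
      rw [this]; ring
    rw [comb, ih]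
    linear_combination - ff_succ (a+b) N

noncomputable def gg (α : ℝ) (n k : ℕ) : ℝ := (-1)^k * ff (α + k + 1) (n - k) / k.factorial

lemma lag_eq (α x : ℝ) (n : ℕ) : lag α n x = ∑ k ∈ range (n+1), gg α n k * x^k := by
  unfold lag gg ff
  refine Finset.sum_congr rfl fun k _ => ?_
  ring

lemma lag_ext (α x : ℝ) {n N : ℕ} (h : n ≤ N) :
    lag α n x = ∑ k ∈ range (N+1), (if k ≤ n then gg α n k * x^k else 0) := by
  rw [lag_eq]
  rw [← Finset.sum_subset (Finset.range_subset_range.2 (by omega) :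
        range (n+1) ⊆ range (N+1)) (fun k _ hk => by
      rw [if_neg]; simp only [Finset.mem_range] at hk; omega)]
  refine Finset.sum_congr rfl fun k hk => ?_
  rw [if_pos (by simp only [Finset.mem_range] at hk; omega)]

lemma addition (β γ x y : ℝ) (n : ℕ) :
    ∑ m ∈ range (n+1), lag β (n-m) x * lag γ m y = lag (β+γ+1) n (x+y) := by
  -- LHS to rectangular triple sum
  have L0 : ∑ m ∈ range (n+1), lag β (n-m) x * lag γ m y
      = ∑ m ∈ range (n+1), ∑ a ∈ range (n+1), ∑ b ∈ range (n+1),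
          (if a ≤ n-m then gg β (n-m) a * x^a else 0) *
          (if b ≤ m then gg γ m b * y^b else 0) := by
    refine Finset.sum_congr rfl fun m hm => ?_
    have hm' : m ≤ n := by simp only [Finset.mem_range] at hm; omega
    rw [lag_ext β x (Nat.sub_le n m), lag_ext γ y hm', Finset.sum_mul_sum]
  have L1 : ∑ m ∈ range (n+1), lag β (n-m) x * lag γ m y
      = ∑ a ∈ range (n+1), ∑ b ∈ range (n+1), ∑ m ∈ range (n+1),
          (if a ≤ n-m then gg β (n-m) a * x^a else 0) *
          (if b ≤ m then gg γ m b * y^b else 0) := by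
    rw [L0, Finset.sum_comm]
    exact Finset.sum_congr rfl fun a _ => Finset.sum_comm
  -- inner sum over m
  have inner : ∀ a ∈ range (n+1), ∀ b ∈ range (n+1),
      ∑ m ∈ range (n+1),
          (if a ≤ n-m then gg β (n-m) a * x^a else 0) *
          (if b ≤ m then gg γ m b * y^b else 0)
      = if a + b ≤ n then
          (-1)^(a+b) * x^a * y^b / (a.factorial * b.factorial) *
            ff (β+γ+(a+b)+2) (n-(a+b))
        else 0 := by
    intro a ha b hb
    simp only [Finset.mem_range] at ha hb
    by_cases hab : a + b ≤ n
    · rw [if_pos hab]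
      have hsub : Finset.Icc b (n-a) ⊆ range (n+1) := by
        intro m hm; simp only [Finset.mem_Icc] at hm; simp only [Finset.mem_range]; omega
      rw [← Finset.sum_subset hsub (fun m hm hm' => by
        simp only [Finset.mem_range] at hm
        simp only [Finset.mem_Icc, not_and_or, not_le] at hm'
        rcases hm' with h | h
        · rw [if_neg (show ¬ b ≤ m by omega)]; ring
        · rw [if_neg (show ¬ a ≤ n - m by omega)]; ring)]
      have step : ∑ m ∈ Finset.Icc b (n-a),
          (if a ≤ n-m then gg β (n-m) a * x^a else 0) *
          (if b ≤ m then gg γ m b * y^b else 0)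
          = ∑ m ∈ Finset.Icc b (n-a), (gg β (n-m) a * x^a) * (gg γ m b * y^b) := by
        refine Finset.sum_congr rfl fun m hm => ?_
        simp only [Finset.mem_Icc] at hm
        rw [if_pos (by omega), if_pos (by omega)]
      rw [step, ← Finset.Ico_add_one_right_eq_Icc, Finset.sum_Ico_eq_sum_range]
      have hM : n - a + 1 - b = (n - (a+b)) + 1 := by omega
      rw [hM]
      have key : ∑ v ∈ range ((n-(a+b))+1),
          (gg β (n-(b+v)) a * x^a) * (gg γ (b+v) b * y^b)
          = (-1)^(a+b) * x^a * y^b / (a.factorial * b.factorial) *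
            ∑ v ∈ range ((n-(a+b))+1), ff (γ+b+1) v * ff (β+a+1) ((n-(a+b))-v) := by
        rw [Finset.mul_sum]
        refine Finset.sum_congr rfl fun v hv => ?_
        simp only [Finset.mem_range] at hv
        have e1 : b + v - b = v := by omega
        have e2 : n - (b+v) - a = n - (a+b) - v := by omega
        unfold gg
        rw [e1, e2, pow_add]
        have ha' : (a.factorial : ℝ) ≠ 0 := Nat.cast_ne_zero.2 a.factorial_ne_zero
        have hb' : (b.factorial : ℝ) ≠ 0 := Nat.cast_ne_zero.2 b.factorial_ne_zero
        field_simp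
      rw [key]
      have vdm := vandermonde (γ+(b:ℝ)+1) (β+(a:ℝ)+1) (n-(a+b))
      rw [vdm]
      have harg : γ+(b:ℝ)+1 + (β+(a:ℝ)+1) = β+γ+((a:ℝ)+(b:ℝ))+2 := by ring
      rw [harg]
    · rw [if_neg hab]
      refine Finset.sum_eq_zero fun m hm => ?_
      simp only [Finset.mem_range] at hm
      by_cases h1 : b ≤ m
      · rw [if_neg (by omega)]; ring
      · rw [if_neg h1]; ring
  -- RHS to rectangular double sum
  have R0 : lag (β+γ+1) n (x+y)
      = ∑ p ∈ range (n+1), ∑ a ∈ range (n+1),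
          (if a ≤ p then gg (β+γ+1) n p * (x^a * y^(p-a) * ((p.choose a : ℕ):ℝ)) else 0) := by
    rw [lag_eq]
    refine Finset.sum_congr rfl fun p hp => ?_
    simp only [Finset.mem_range] at hp
    rw [add_pow, Finset.mul_sum]
    rw [← Finset.sum_subset (Finset.range_subset_range.2 (by omega) : range (p+1) ⊆ range (n+1))
      (fun a _ ha' => by
        rw [if_neg (by simp only [Finset.mem_range] at ha'; omega)])]
    refine Finset.sum_congr rfl fun a ha => ?_
    rw [if_pos (by simp only [Finset.mem_range] at ha; omega)]
  have R1 : lag (β+γ+1) n (x+y)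
      = ∑ a ∈ range (n+1), ∑ p ∈ range (n+1),
          (if a ≤ p then gg (β+γ+1) n p * (x^a * y^(p-a) * ((p.choose a : ℕ):ℝ)) else 0) :=
    R0.trans Finset.sum_comm
  rw [L1, R1]
  refine Finset.sum_congr rfl fun a ha => ?_
  simp only [Finset.mem_range] at ha
  -- collapse both sides to triangular sums over b/p
  have lhs_tri : ∑ b ∈ range (n+1), ∑ m ∈ range (n+1),
          (if a ≤ n-m then gg β (n-m) a * x^a else 0) *
          (if b ≤ m then gg γ m b * y^b else 0)
      = ∑ b ∈ range ((n-a)+1),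
          (-1)^(a+b) * x^a * y^b / (a.factorial * b.factorial) *
            ff (β+γ+((a:ℝ)+(b:ℝ))+2) (n-(a+b)) := by
    have e0 : ∑ b ∈ range (n+1), ∑ m ∈ range (n+1),
          (if a ≤ n-m then gg β (n-m) a * x^a else 0) *
          (if b ≤ m then gg γ m b * y^b else 0)
        = ∑ b ∈ range (n+1), (if a + b ≤ n then
            (-1)^(a+b) * x^a * y^b / (a.factorial * b.factorial) *
              ff (β+γ+((a:ℝ)+(b:ℝ))+2) (n-(a+b)) else 0) :=
      Finset.sum_congr rfl fun b hb => inner a (by simp only [Finset.mem_range]; omega) b hb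
    rw [e0, ← Finset.sum_subset (Finset.range_subset_range.2 (by omega) :
        range ((n-a)+1) ⊆ range (n+1)) (fun b _ hb' => by
      rw [if_neg (by simp only [Finset.mem_range] at hb'; omega)])]
    refine Finset.sum_congr rfl fun b hb => ?_
    rw [if_pos (by simp only [Finset.mem_range] at hb; omega)]
  have rhs_tri : ∑ p ∈ range (n+1),
          (if a ≤ p then gg (β+γ+1) n p * (x^a * y^(p-a) * ((p.choose a : ℕ):ℝ)) else 0)
      = ∑ b ∈ range ((n-a)+1),
          gg (β+γ+1) n (a+b) * (x^a * y^((a+b)-a) * (((a+b).choose a : ℕ):ℝ)) := by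
    have hsub : Finset.Icc a n ⊆ range (n+1) := fun p hp => by
      simp only [Finset.mem_Icc] at hp; simp only [Finset.mem_range]; omega
    rw [← Finset.sum_subset hsub (fun p hp hp' => by
      simp only [Finset.mem_range] at hp
      simp only [Finset.mem_Icc, not_and_or, not_le] at hp'
      rw [if_neg (by omega)])]
    rw [← Finset.Ico_add_one_right_eq_Icc, Finset.sum_Ico_eq_sum_range]
    have hM : n + 1 - a = (n-a) + 1 := by omega
    rw [hM]
    refine Finset.sum_congr rfl fun b hb => ?_
    rw [if_pos (by omega)]
  rw [lhs_tri, rhs_tri]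
  refine Finset.sum_congr rfl fun b hb => ?_
  simp only [Finset.mem_range] at hb
  have e3 : (a+b) - a = b := by omega
  unfold gg
  rw [e3]
  have harg2 : β+γ+1+(((a+b : ℕ)):ℝ)+1 = β+γ+((a:ℝ)+(b:ℝ))+2 := by push_cast; ring
  rw [harg2]
  have ha' : (a.factorial : ℝ) ≠ 0 := Nat.cast_ne_zero.2 a.factorial_ne_zero
  have hb' : (b.factorial : ℝ) ≠ 0 := Nat.cast_ne_zero.2 b.factorial_ne_zero
  have hab' : ((a+b).factorial : ℝ) ≠ 0 := Nat.cast_ne_zero.2 (a+b).factorial_ne_zero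
  have hc : (((a+b).choose a : ℕ):ℝ) * (a.factorial:ℝ) * (b.factorial:ℝ)
      = ((a+b).factorial : ℝ) := by
    have h := Nat.choose_mul_factorial_mul_factorial (Nat.le_add_right a b)
    rw [e3] at h
    exact_mod_cast h
  field_simp
  linear_combination (-1 : ℝ) * x^a * y^b *
    ff (β+γ+((a:ℝ)+(b:ℝ))+2) (n-(a+b)) * hc

lemma lag_zero_arg (δ : ℝ) (n : ℕ) : lag δ n 0 = poch (δ+1) n / n.factorial := by
  unfold lag
  rw [Finset.sum_eq_single 0]
  · simp
  · intro k _ hk0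
    simp [zero_pow hk0]
  · intro h
    simp at h

theorem stmt14 (α x : ℝ) (i j : ℕ) (hij : j ≤ i) :
    ∑ k ∈ Finset.Icc j i, lag (-α - i - 1) (i - k) (-x) * lag (α + j) (k - j) x =
      if i = j then 1 else 0 := by
  rw [← Finset.Ico_add_one_right_eq_Icc, Finset.sum_Ico_eq_sum_range]
  have hn : i + 1 - j = (i - j) + 1 := by omega
  rw [hn]
  have hterm : ∀ m, lag (-α - i - 1) (i - (j+m)) (-x) * lag (α + j) ((j+m) - j) x
      = lag (-α - i - 1) ((i-j) - m) (-x) * lag (α + j) m x := by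
    intro m
    have e1 : i - (j+m) = (i-j) - m := by omega
    have e2 : (j+m) - j = m := by omega
    rw [e1, e2]
  simp only [hterm]
  rw [addition]
  have harg : (-α - (i:ℝ) - 1) + (α + (j:ℝ)) + 1 = (j:ℝ) - (i:ℝ) := by ring
  rw [harg, neg_add_cancel, lag_zero_arg]
  by_cases hij' : i = j
  · subst hij'
    simp [poch]
  · rw [if_neg hij']
    have h1 : i - j - 1 ∈ range (i - j) := by
      simp only [Finset.mem_range]; omega
    have hz : poch ((j:ℝ) - (i:ℝ) + 1) (i - j) = 0 := by
      unfold poch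
      refine Finset.prod_eq_zero h1 ?_
      have hc : ((i - j - 1 : ℕ) : ℝ) = (i:ℝ) - (j:ℝ) - 1 := by
        push_cast [Nat.cast_sub hij, Nat.cast_sub (by omega : 1 ≤ i - j)]
        ring
      rw [hc]; ring
    rw [hz]
    simp
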